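/- For M_r in ℂ⁴ given by {Im w₁ = |z₁|², Im w₂ = |z₂|²} with complexification 𝓜 = {w₁ − τ₁ = 2iz₁χ₁, w₂ − τ₂ = 2iz₂χ₂}, and M' in ℂ⁴ given by {Im w' = |z'₁|²+|z'₂|²+|z'₃|²} with complexification 𝓜' = {w' − τ' = 2i(z'₁χ'₁+z'₂χ'₂+z'₃χ'₃)}, for every positive integer r the map 𝓗_r(z,w,χ,τ) = (z₁, z₂, w₁, w₁+w₂, χ₁−2iχ₁τ₁−2iχ₁τ₁^r, χ₂, τ₁^r+τ₁, τ₁+τ₂−2iτ₁²−2iτ₁^{r+1}) maps 𝓜 into 𝓜' and has invertible derivative at 0. -/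

import Mathlib

open Complex

/-- The map `𝓗_r` of Remark (thm:NiceExample), on coordinates
`(z₁,z₂,w₁,w₂,χ₁,χ₂,τ₁,τ₂)`. -/
noncomputable def Hmap (r : ℕ) (p : ℂ × ℂ × ℂ × ℂ × ℂ × ℂ × ℂ × ℂ) :
    ℂ × ℂ × ℂ × ℂ × ℂ × ℂ × ℂ × ℂ :=
  match p with
  | (z₁, z₂, w₁, w₂, χ₁, χ₂, τ₁, τ₂) =>
    (z₁, z₂, w₁, w₁ + w₂,
      χ₁ - 2 * I * χ₁ * τ₁ - 2 * I * χ₁ * τ₁ ^ r, χ₂,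
      τ₁ ^ r + τ₁,
      τ₁ + τ₂ - 2 * I * τ₁ ^ 2 - 2 * I * τ₁ ^ (r + 1))

set_option maxRecDepth 8000

/-- Auxiliary: the 8-fold product of `ℂ`. -/
abbrev P8aux : Type := ℂ × ℂ × ℂ × ℂ × ℂ × ℂ × ℂ × ℂ

/-- Auxiliary: the derivative of `Hmap` at `0` is bijective. -/
theorem Hmap_fderiv_bijective (r : ℕ) (hr : 1 ≤ r) :
    Function.Bijective (fderiv ℂ (Hmap r) 0) := by
  obtain ⟨m, rfl⟩ : ∃ m, r = m + 1 := ⟨r - 1, (Nat.succ_pred_eq_of_pos hr).symm⟩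
  have hid : HasFDerivAt (id : P8aux → P8aux) (ContinuousLinearMap.id ℂ _) 0 := hasFDerivAt_id 0
  have h1 := hid.fst
  have hs1 := hid.snd
  have h2 := hs1.fst
  have hs2 := hs1.snd
  have h3 := hs2.fst
  have hs3 := hs2.snd
  have h4 := hs3.fst
  have hs4 := hs3.snd
  have h5 := hs4.fst
  have hs5 := hs4.snd
  have h6 := hs5.fst
  have hs6 := hs5.snd
  have h7 := hs6.fst
  have h8 := hs6.snd
  -- power rule at 0
  have hpow : ∀ n : ℕ, HasFDerivAt
      (fun p : P8aux => p.2.2.2.2.2.2.1 ^ (n + 1))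
      (((0 : ℂ) ^ n) •
        ((ContinuousLinearMap.fst ℂ ℂ ℂ).comp
          ((ContinuousLinearMap.snd ℂ ℂ (ℂ × ℂ)).comp
            ((ContinuousLinearMap.snd ℂ ℂ (ℂ × ℂ × ℂ)).comp
              ((ContinuousLinearMap.snd ℂ ℂ (ℂ × ℂ × ℂ × ℂ)).comp
                ((ContinuousLinearMap.snd ℂ ℂ (ℂ × ℂ × ℂ × ℂ × ℂ)).comp
                  ((ContinuousLinearMap.snd ℂ ℂ (ℂ × ℂ × ℂ × ℂ × ℂ × ℂ)).comp
                    ((ContinuousLinearMap.snd ℂ ℂ (ℂ × ℂ × ℂ × ℂ × ℂ × ℂ × ℂ)).comp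
                      (ContinuousLinearMap.id ℂ P8aux)))))))))
      0 := by
    intro n
    induction n with
    | zero => simpa using h7
    | succ k ih =>
      have hmul := h7.mul ih
      have h0 : ((id (0 : P8aux))).2.2.2.2.2.2.1 = (0 : ℂ) := rfl
      have h0' : ((0 : P8aux)).2.2.2.2.2.2.1 = (0 : ℂ) := rfl
      have heq : (fun p : P8aux => p.2.2.2.2.2.2.1 ^ (k + 1 + 1)) = fun p : P8aux =>
          p.2.2.2.2.2.2.1 * p.2.2.2.2.2.2.1 ^ (k + 1) := by
        funext p; rw [pow_succ']
      rw [heq]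
      have hmul' := hmul.congr_of_eventuallyEq (Filter.Eventually.of_forall fun p => rfl)
      refine hmul'.congr_fderiv ?_
      rw [h0, h0']
      ext x <;> simp
  have hf5 := ((h5.sub ((h5.const_mul (2*I)).mul h7)).sub
    ((h5.const_mul (2*I)).mul (hpow m)))
  have hf7 := (hpow m).add h7
  have hf8 := ((h7.add h8).sub ((hpow 1).const_mul (2*I))).sub
    ((hpow (m+1)).const_mul (2*I))
  have hH := (h1.prodMk (h2.prodMk (h3.prodMk ((h3.add h4).prodMk
    (hf5.prodMk (h6.prodMk (hf7.prodMk hf8)))))))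
  have hH' : HasFDerivAt (Hmap (m+1)) _ 0 :=
    hH.congr_of_eventuallyEq (Filter.Eventually.of_forall fun p => by
      obtain ⟨a, b, c, d, e, f, g, h⟩ := p; rfl)
  rw [hH'.fderiv]
  have key : ∀ T : P8aux →L[ℂ] P8aux, Function.Injective T → Function.Bijective T := by
    intro T hT
    refine ⟨hT, ?_⟩
    have := LinearMap.injective_iff_surjective (f := (T : P8aux →ₗ[ℂ] P8aux))
    rw [ContinuousLinearMap.coe_coe] at this
    exact this.mp hT
  apply key
  intro p q hpq
  obtain ⟨p1, p2, p3, p4, p5, p6, p7, p8⟩ := p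
  obtain ⟨q1, q2, q3, q4, q5, q6, q7, q8⟩ := q
  have hc : (0 : ℂ) ^ m + 1 ≠ 0 := by
    rcases Nat.eq_zero_or_pos m with h | h
    · subst h; norm_num
    · rw [zero_pow h.ne']; norm_num
  simp only [ContinuousLinearMap.prod_apply, ContinuousLinearMap.add_apply,
    ContinuousLinearMap.coe_sub', Pi.sub_apply, ContinuousLinearMap.coe_comp',
    ContinuousLinearMap.coe_fst', ContinuousLinearMap.coe_snd',
    ContinuousLinearMap.coe_smul', Pi.smul_apply, smul_eq_mul,
    ContinuousLinearMap.coe_id', Function.comp_apply, id_eq,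
    Prod.fst_zero, Prod.snd_zero, zero_smul, smul_zero, zero_add, add_zero,
    zero_pow, Nat.succ_ne_zero, ne_eq, not_false_iff, zero_mul, mul_zero,
    pow_one, Prod.mk.injEq, ContinuousLinearMap.zero_apply,
    ContinuousLinearMap.coe_zero', Pi.zero_apply, sub_zero] at hpq
  obtain ⟨e1, e2, e3, e4, e5, e6, e7, e8⟩ := hpq
  have h77 : p7 = q7 := by
    have hz : ((0 : ℂ) ^ m + 1) * (p7 - q7) = 0 := by linear_combination e7
    exact sub_eq_zero.mp ((mul_eq_zero.mp hz).resolve_left hc)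
  simp only [Prod.mk.injEq]
  refine ⟨e1, e2, e3, ?_, e5, e6, h77, ?_⟩
  · linear_combination e4 - e3
  · linear_combination e8 - h77

theorem stmt_16 (r : ℕ) (hr : 1 ≤ r) :
    (∀ z₁ z₂ w₁ w₂ χ₁ χ₂ τ₁ τ₂ : ℂ,
      w₁ - τ₁ = 2 * I * z₁ * χ₁ → w₂ - τ₂ = 2 * I * z₂ * χ₂ →
      match Hmap r (z₁, z₂, w₁, w₂, χ₁, χ₂, τ₁, τ₂) with
      | (z₁', z₂', z₃', w', χ₁', χ₂', χ₃', τ') =>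
          w' - τ' = 2 * I * (z₁' * χ₁' + z₂' * χ₂' + z₃' * χ₃')) ∧
    Function.Bijective (fderiv ℂ (Hmap r) 0) := by
  refine ⟨?_, Hmap_fderiv_bijective r hr⟩
  intro z₁ z₂ w₁ w₂ χ₁ χ₂ τ₁ τ₂ h1 h2
  simp only [Hmap]
  linear_combination (1 - 2 * I * (τ₁ ^ r + τ₁)) * h1 + h2
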